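/- Let (S_n)_{n≥1} be a real sequence with S_0 = 0, let (η_n)_{n≥1} be positive increasing with η_n^2 comparable to n (i.e., C^{-1} n ≤ η_n^2 ≤ C n for some C ≥ 1), let γ > 1/2 and ε ∈ (0,1). If S_n = O(η_n^{2-(4γ-2)ε}), then the tail sums S'_n := Σ_{i≥n} (S_i − S_{i-1})/η_i^{4γ} satisfy S'_n = O(η_n^{(2-4γ)(1+ε)}). -/

import Mathlib

open Filter Topology

-- core t-inequality
lemma t_ineq {p t : ℝ} (hp : 0 < p) (ht0 : 0 < t) (ht1 : t ≤ 1) :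
    1 - t ≤ max 1 (1/p) * (1 - t ^ p) := by
  rcases le_or_gt 1 p with h1 | h1
  · have htp : t ^ p ≤ t := by
      calc t ^ p ≤ t ^ (1:ℝ) := Real.rpow_le_rpow_of_exponent_ge ht0 ht1 h1
      _ = t := Real.rpow_one t
    have h2 : (1:ℝ) ≤ max 1 (1/p) := le_max_left _ _
    nlinarith [Real.rpow_nonneg ht0.le p]
  · have hb : t ^ p ≤ 1 + p * (t - 1) := by
      have := rpow_one_add_le_one_add_mul_self (s := t - 1) (by linarith) hp.le h1.le
      simpa using this
    have hmax : max 1 (1/p) = 1/p := by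
      rw [max_eq_right]
      rw [le_div_iff₀ hp]; linarith
    rw [hmax, div_mul_eq_mul_div, le_div_iff₀ hp]
    nlinarith

lemma key_cmp {x y q b : ℝ} (hx : 0 < x) (hxy : x ≤ y) (hq : 0 < q) (hb : b < q) :
    x ^ b * (1 / x ^ q - 1 / y ^ q)
      ≤ max 1 (1 / ((q - b) / q)) * (x ^ (b - q) - y ^ (b - q)) := by
  have hy : 0 < y := hx.trans_le hxy
  set p : ℝ := (q - b) / q with hpdef
  have hp : 0 < p := div_pos (by linarith) hq
  set t : ℝ := (x / y) ^ q with htdef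
  have ht0 : 0 < t := Real.rpow_pos_of_pos (div_pos hx hy) q
  have ht1 : t ≤ 1 := Real.rpow_le_one (div_pos hx hy).le
    ((div_le_one hy).mpr hxy) hq.le
  have hxbq : (0:ℝ) < x ^ (b - q) := Real.rpow_pos_of_pos hx _
  have hxq : (0:ℝ) < x ^ q := Real.rpow_pos_of_pos hx q
  have hyq : (0:ℝ) < y ^ q := Real.rpow_pos_of_pos hy q
  have e1 : x ^ b * (1 / x ^ q - 1 / y ^ q) = x ^ (b - q) * (1 - t) := by
    rw [htdef, Real.div_rpow hx.le hy.le, Real.rpow_sub hx]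
    field_simp
  have htp : t ^ p = x ^ (q - b) / y ^ (q - b) := by
    rw [htdef, ← Real.rpow_mul (div_pos hx hy).le]
    have hqp : q * p = q - b := by
      rw [hpdef]; field_simp
    rw [hqp, Real.div_rpow hx.le hy.le]
  have e2 : x ^ (b - q) - y ^ (b - q) = x ^ (b - q) * (1 - t ^ p) := by
    rw [htp]
    have hxx : x ^ (b - q) * x ^ (q - b) = 1 := by
      rw [← Real.rpow_add hx]; norm_num
    have hyy : y ^ (b - q) = 1 / y ^ (q - b) := by
      rw [show b - q = -(q - b) by ring, Real.rpow_neg hy.le, one_div]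
    have hyqb : (0:ℝ) < y ^ (q - b) := Real.rpow_pos_of_pos hy _
    rw [hyy]
    field_simp
    nlinarith [hxx]
  rw [e1, e2]
  calc x ^ (b - q) * (1 - t) ≤ x ^ (b - q) * (max 1 (1/p) * (1 - t ^ p)) :=
        mul_le_mul_of_nonneg_left (t_ineq hp ht0 ht1) hxbq.le
    _ = max 1 (1/p) * (x ^ (b - q) * (1 - t ^ p)) := by ring

lemma abel_id (S : ℕ → ℝ) (a : ℕ → ℝ) (n : ℕ) :
    ∀ m : ℕ, ∑ i ∈ Finset.range (m+1), (S (n+i) - S (n+i-1)) / a (n+i)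
      = S (n+m) / a (n+m) - S (n-1) / a n
        + ∑ i ∈ Finset.range m, S (n+i) * (1 / a (n+i) - 1 / a (n+i+1)) := by
  intro m
  induction m with
  | zero => simp [sub_div]
  | succ m ih =>
    rw [Finset.sum_range_succ, ih, Finset.sum_range_succ]
    have h1 : n + (m+1) - 1 = n + m := by omega
    have h2 : n + (m+1) = (n + m) + 1 := by omega
    rw [h1, h2]
    ring


set_option maxHeartbeats 2000000 in
/-- Abel summation estimate: if `S 0 = 0`, `η` is positive increasing
with `η_n²` comparable to `n`, `γ > 1/2`, `ε ∈ (0,1)` and `S n = O(η_n^{2-(4γ-2)ε})`,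
then the tail sums `S'_n = ∑_{i≥n} (S_i − S_{i-1})/η_i^{4γ}` satisfy
`S'_n = O(η_n^{(2-4γ)(1+ε)})`. -/
theorem abel_summation_tail_estimate
    (S : ℕ → ℝ) (hS0 : S 0 = 0)
    (η : ℕ → ℝ) (hηpos : ∀ n, 0 < η n) (hηmono : Monotone η)
    (C : ℝ) (hC : 1 ≤ C)
    (hηcomp : ∀ n : ℕ, 1 ≤ n → (n : ℝ) / C ≤ (η n) ^ (2 : ℕ) ∧ (η n) ^ (2 : ℕ) ≤ C * n)
    (γ : ℝ) (hγ : 1 / 2 < γ)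
    (ε : ℝ) (hε0 : 0 < ε) (hε1 : ε < 1)
    (hSbound : ∃ A : ℝ, 0 < A ∧ ∀ n : ℕ, 1 ≤ n →
      |S n| ≤ A * (η n) ^ ((2 : ℝ) - (4 * γ - 2) * ε)) :
    ∃ B : ℝ, 0 < B ∧ ∀ n : ℕ, 1 ≤ n →
      |∑' i : ℕ, (S (n + i) - S (n + i - 1)) / (η (n + i)) ^ (4 * γ)|
        ≤ B * (η n) ^ (((2 : ℝ) - 4 * γ) * (1 + ε)) := by
  obtain ⟨A, hA, hSb⟩ := hSbound
  set q : ℝ := 4 * γ with hqdef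
  set b : ℝ := (2 : ℝ) - (4 * γ - 2) * ε with hbdef
  have hq0 : 0 < q := by rw [hqdef]; linarith
  have hbq : b < q := by rw [hbdef, hqdef]; nlinarith
  have hbqe : b - q = ((2 : ℝ) - 4 * γ) * (1 + ε) := by rw [hbdef, hqdef]; ring
  set K : ℝ := max 1 (1 / ((q - b) / q)) with hKdef
  have hK1 : (1 : ℝ) ≤ K := le_max_left _ _
  have hsqrt2 : (1 : ℝ) ≤ Real.sqrt 2 := by
    rw [show (1:ℝ) = Real.sqrt 1 by simp]
    exact Real.sqrt_le_sqrt (by norm_num)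
  have hbase : (1 : ℝ) ≤ Real.sqrt 2 * C := by nlinarith
  have hbase0 : (0 : ℝ) < Real.sqrt 2 * C := by linarith
  set c1 : ℝ := (Real.sqrt 2 * C) ^ |b| with hc1def
  have hc11 : (1 : ℝ) ≤ c1 := Real.one_le_rpow hbase (abs_nonneg b)
  refine ⟨A * (c1 + K), mul_pos hA (by linarith), fun n hn => ?_⟩
  rw [← hbqe]
  have hbn0 : (0 : ℝ) < η n ^ (b - q) := Real.rpow_pos_of_pos (hηpos n) _
  set f : ℕ → ℝ := fun i => (S (n + i) - S (n + i - 1)) / (η (n + i)) ^ q with hfdef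
  by_cases hsum : Summable f
  · -- Bound 1 : generic S-term over power
    have hB1 : ∀ k : ℕ, 1 ≤ k → |S k| / η k ^ q ≤ A * η k ^ (b - q) := by
      intro k hk
      have hkq : (0 : ℝ) < η k ^ q := Real.rpow_pos_of_pos (hηpos k) q
      have h1 : |S k| / η k ^ q ≤ (A * η k ^ b) / η k ^ q := by
        have := mul_le_mul_of_nonneg_right (hSb k hk) (inv_nonneg.mpr hkq.le)
        simpa [div_eq_mul_inv] using this
      calc |S k| / η k ^ q ≤ (A * η k ^ b) / η k ^ q := h1
        _ = A * η k ^ (b - q) := by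
            rw [Real.rpow_sub (hηpos k) b q, mul_div_assoc]
    -- Bound 2 : the S (n-1) term
    have hB2 : |S (n - 1)| / η n ^ q ≤ A * c1 * η n ^ (b - q) := by
      rcases Nat.lt_or_ge n 2 with h2 | h2
      · have hn1 : n = 1 := by omega
        rw [hn1]
        simp only [Nat.sub_self, hS0, abs_zero, zero_div]
        exact mul_nonneg (mul_nonneg hA.le (by linarith)) (Real.rpow_nonneg (hηpos 1).le _)
      · have hn1 : 1 ≤ n - 1 := by omega
        have hcast : ((n - 1 : ℕ) : ℝ) = (n : ℝ) - 1 := by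
          push_cast [Nat.cast_sub hn]; ring
        have h1 := (hηcomp n hn).2
        have h2' := (hηcomp (n - 1) hn1).1
        have hC0 : (0 : ℝ) < C := by linarith
        have hnn : (2 : ℝ) ≤ (n : ℝ) := by exact_mod_cast h2
        have hη1 : 0 < η (n - 1) := hηpos _
        have hkey : η n ≤ Real.sqrt 2 * C * η (n - 1) := by
          have hs2 : (Real.sqrt 2) ^ 2 = 2 := Real.sq_sqrt (by norm_num)
          have hb2 : ((n : ℝ) - 1) ≤ C * η (n - 1) ^ 2 := by
            rw [div_le_iff₀ hC0] at h2'
            rw [hcast] at h2'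
            linarith
          have hineq : η n ^ 2 ≤ (Real.sqrt 2 * C * η (n - 1)) ^ 2 := by
            have e1 : (Real.sqrt 2 * C * η (n - 1)) ^ 2
                = 2 * (C ^ 2 * η (n - 1) ^ 2) := by
              rw [mul_pow, mul_pow, hs2]; ring
            rw [e1]
            have hint1 : 0 ≤ C * ((n:ℝ) - 2) :=
              mul_nonneg hC0.le (by linarith)
            have hint2 : 0 ≤ C * (C * η (n - 1) ^ 2 - ((n:ℝ) - 1)) :=
              mul_nonneg hC0.le (by linarith)
            nlinarith [hint1, hint2]
          calc η n = Real.sqrt (η n ^ 2) := (Real.sqrt_sq (hηpos n).le).symm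
            _ ≤ Real.sqrt ((Real.sqrt 2 * C * η (n - 1)) ^ 2) :=
              Real.sqrt_le_sqrt hineq
            _ = Real.sqrt 2 * C * η (n - 1) :=
              Real.sqrt_sq (by positivity)
        have hmain : η (n - 1) ^ b ≤ c1 * η n ^ b := by
          rcases le_or_gt 0 b with hb0 | hb0
          · have h1' : η (n - 1) ^ b ≤ η n ^ b :=
              Real.rpow_le_rpow (hηpos _).le (hηmono (by omega)) hb0
            have h2'' : (0 : ℝ) ≤ η n ^ b := Real.rpow_nonneg (hηpos n).le b
            calc η (n - 1) ^ b ≤ η n ^ b := h1'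
              _ = 1 * η n ^ b := (one_mul _).symm
              _ ≤ c1 * η n ^ b := mul_le_mul_of_nonneg_right hc11 h2''
          · have hx : 0 < η n / (Real.sqrt 2 * C) := div_pos (hηpos n) hbase0
            have hxy : η n / (Real.sqrt 2 * C) ≤ η (n - 1) := by
              rw [div_le_iff₀ hbase0]
              linarith [hkey]
            have h3 := Real.rpow_le_rpow_of_nonpos hx hxy hb0.le
            have e : (η n / (Real.sqrt 2 * C)) ^ b = c1 * η n ^ b := by
              rw [Real.div_rpow (hηpos n).le hbase0.le, hc1def, abs_of_neg hb0,
                Real.rpow_neg hbase0.le, div_eq_mul_inv, mul_comm]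
            linarith [e ▸ h3]
        have hkq : (0 : ℝ) < η n ^ q := Real.rpow_pos_of_pos (hηpos n) q
        have hSn1 : |S (n - 1)| ≤ A * c1 * η n ^ b := by
          calc |S (n - 1)| ≤ A * η (n - 1) ^ b := hSb _ hn1
            _ ≤ A * (c1 * η n ^ b) := mul_le_mul_of_nonneg_left hmain hA.le
            _ = A * c1 * η n ^ b := by ring
        have h4 := mul_le_mul_of_nonneg_right hSn1 (inv_nonneg.mpr hkq.le)
        calc |S (n - 1)| / η n ^ q ≤ (A * c1 * η n ^ b) / η n ^ q := by
              simpa [div_eq_mul_inv] using h4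
          _ = A * c1 * η n ^ (b - q) := by
              rw [Real.rpow_sub (hηpos n) b q, mul_div_assoc]
    -- Bound 3 : the Q sum
    have hQ : ∀ m : ℕ, |∑ i ∈ Finset.range m,
        S (n + i) * (1 / η (n + i) ^ q - 1 / η (n + i + 1) ^ q)|
          ≤ A * K * η n ^ (b - q) := by
      intro m
      have hterm : ∀ i : ℕ, |S (n + i) * (1 / η (n + i) ^ q - 1 / η (n + i + 1) ^ q)|
          ≤ A * K * (η (n + i) ^ (b - q) - η (n + i + 1) ^ (b - q)) := by
        intro i
        have hx := hηpos (n + i)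
        have hxy : η (n + i) ≤ η (n + i + 1) := hηmono (Nat.le_succ _)
        have hd : 0 ≤ 1 / η (n + i) ^ q - 1 / η (n + i + 1) ^ q := by
          have h1 : η (n + i) ^ q ≤ η (n + i + 1) ^ q :=
            Real.rpow_le_rpow hx.le hxy hq0.le
          have h2a : (0 : ℝ) < η (n + i) ^ q := Real.rpow_pos_of_pos hx q
          have := one_div_le_one_div_of_le h2a h1
          linarith
        rw [abs_mul, abs_of_nonneg hd]
        calc |S (n + i)| * (1 / η (n + i) ^ q - 1 / η (n + i + 1) ^ q)
            ≤ (A * η (n + i) ^ b) * (1 / η (n + i) ^ q - 1 / η (n + i + 1) ^ q) :=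
              mul_le_mul_of_nonneg_right (hSb _ (by omega)) hd
          _ = A * (η (n + i) ^ b * (1 / η (n + i) ^ q - 1 / η (n + i + 1) ^ q)) := by ring
          _ ≤ A * (K * (η (n + i) ^ (b - q) - η (n + i + 1) ^ (b - q))) :=
              mul_le_mul_of_nonneg_left (key_cmp hx hxy hq0 hbq) hA.le
          _ = A * K * (η (n + i) ^ (b - q) - η (n + i + 1) ^ (b - q)) := by ring
      calc |∑ i ∈ Finset.range m,
            S (n + i) * (1 / η (n + i) ^ q - 1 / η (n + i + 1) ^ q)|
          ≤ ∑ i ∈ Finset.range m,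
            |S (n + i) * (1 / η (n + i) ^ q - 1 / η (n + i + 1) ^ q)| :=
            Finset.abs_sum_le_sum_abs _ _
        _ ≤ ∑ i ∈ Finset.range m,
            A * K * (η (n + i) ^ (b - q) - η (n + i + 1) ^ (b - q)) :=
            Finset.sum_le_sum fun i _ => hterm i
        _ = A * K * ∑ i ∈ Finset.range m,
            (η (n + i) ^ (b - q) - η (n + i + 1) ^ (b - q)) := by
            rw [Finset.mul_sum]
        _ = A * K * (η (n + 0) ^ (b - q) - η (n + m) ^ (b - q)) := by
            have hsum_eq : ∑ i ∈ Finset.range m,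
                (η (n + i) ^ (b - q) - η (n + i + 1) ^ (b - q))
                = η (n + 0) ^ (b - q) - η (n + m) ^ (b - q) :=
              Finset.sum_range_sub' (fun j => η (n + j) ^ (b - q)) m
            rw [hsum_eq]
        _ ≤ A * K * η n ^ (b - q) := by
            have h0 : (0 : ℝ) ≤ η (n + m) ^ (b - q) := Real.rpow_nonneg (hηpos _).le _
            have hAK : (0 : ℝ) ≤ A * K := mul_nonneg hA.le (by linarith)
            have := mul_le_mul_of_nonneg_left
              (sub_le_self (η (n + 0) ^ (b - q)) h0) hAK
            simpa using this
    -- identity and limit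
    have hid := abel_id S (fun k => η k ^ q) n
    have htends : Tendsto (fun m => ∑ i ∈ Finset.range (m + 1), f i) atTop
        (𝓝 (∑' i, f i)) :=
      hsum.hasSum.tendsto_sum_nat.comp (tendsto_add_atTop_nat 1)
    have habs : Tendsto (fun m => |∑ i ∈ Finset.range (m + 1), f i|) atTop
        (𝓝 |∑' i, f i|) := htends.abs
    have hη_top : Tendsto (fun m => η (n + m)) atTop atTop := by
      rw [tendsto_atTop_atTop]
      intro r
      obtain ⟨k, hk⟩ := exists_nat_ge (C * r ^ 2)
      refine ⟨k, fun m hm => ?_⟩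
      have h1 : 1 ≤ n + m := by omega
      have h2 := (hηcomp (n + m) h1).1
      have hC0 : (0 : ℝ) < C := by linarith
      have hnm : (k : ℝ) ≤ ((n + m : ℕ) : ℝ) := Nat.cast_le.mpr (by omega)
      have hr2 : r ^ 2 ≤ η (n + m) ^ 2 := by
        have : r ^ 2 ≤ ((n + m : ℕ) : ℝ) / C := by
          rw [le_div_iff₀ hC0]; nlinarith [hk, hnm]
        linarith
      rcases le_or_gt r 0 with hr | hr
      · linarith [hηpos (n + m)]
      · calc r = Real.sqrt (r ^ 2) := (Real.sqrt_sq hr.le).symm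
          _ ≤ Real.sqrt (η (n + m) ^ 2) := Real.sqrt_le_sqrt hr2
          _ = η (n + m) := Real.sqrt_sq (hηpos _).le
    have he : Tendsto (fun m => A * η (n + m) ^ (b - q)) atTop (𝓝 0) := by
      have h1 : Tendsto (fun m => η (n + m) ^ (-(q - b))) atTop (𝓝 0) :=
        (tendsto_rpow_neg_atTop (by linarith : (0:ℝ) < q - b)).comp hη_top
      have hE : (fun m => A * η (n + m) ^ (b - q))
          = fun m => A * η (n + m) ^ (-(q - b)) := by
        funext m; rw [show b - q = -(q - b) by ring]
      rw [hE]
      simpa using h1.const_mul A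
    have hD : Tendsto (fun m => A * η (n + m) ^ (b - q)
        + (A * c1 * η n ^ (b - q) + A * K * η n ^ (b - q))) atTop
        (𝓝 (0 + (A * c1 * η n ^ (b - q) + A * K * η n ^ (b - q)))) :=
      he.add tendsto_const_nhds
    have hbound : ∀ m : ℕ, |∑ i ∈ Finset.range (m + 1), f i|
        ≤ A * η (n + m) ^ (b - q)
          + (A * c1 * η n ^ (b - q) + A * K * η n ^ (b - q)) := by
      intro m
      simp only [hfdef]
      rw [hid m]
      have t1 : |S (n + m) / η (n + m) ^ q| ≤ A * η (n + m) ^ (b - q) := by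
        rw [abs_div, abs_of_pos (Real.rpow_pos_of_pos (hηpos _) q)]
        exact hB1 (n + m) (by omega)
      have t2 : |S (n - 1) / η n ^ q| ≤ A * c1 * η n ^ (b - q) := by
        rw [abs_div, abs_of_pos (Real.rpow_pos_of_pos (hηpos n) q)]
        exact hB2
      have t3 := hQ m
      calc |S (n + m) / η (n + m) ^ q - S (n - 1) / η n ^ q
            + ∑ i ∈ Finset.range m,
              S (n + i) * (1 / η (n + i) ^ q - 1 / η (n + i + 1) ^ q)|
          ≤ |S (n + m) / η (n + m) ^ q| + |S (n - 1) / η n ^ q|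
            + |∑ i ∈ Finset.range m,
              S (n + i) * (1 / η (n + i) ^ q - 1 / η (n + i + 1) ^ q)| := by
            exact (abs_add_le _ _).trans (add_le_add_left (abs_sub _ _) _)
        _ ≤ A * η (n + m) ^ (b - q)
            + (A * c1 * η n ^ (b - q) + A * K * η n ^ (b - q)) := by
            linarith
    have hfin := le_of_tendsto_of_tendsto' habs hD hbound
    have : A * (c1 + K) * η n ^ (b - q)
        = 0 + (A * c1 * η n ^ (b - q) + A * K * η n ^ (b - q)) := by ring
    rw [this]
    exact hfin
  · rw [tsum_eq_zero_of_not_summable hsum, abs_zero]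
    exact mul_nonneg (mul_nonneg hA.le (by linarith)) hbn0.le
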